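/- Let N ≥ 1, let f₁,…,f_N and ψ₁,…,ψ_N : ℝ → ℝ be smooth with each f_m nowhere zero, fix base points r*₁,…,r*_N ∈ ℝ, and define, for each k ∈ ℤ, c_k : ℝ^N → ℝ by c_k(r) = Σ_{m=1}^N ∫_{r*_m}^{r_m} f_m(s)^{k−1} ψ'_m(s) ds, and define W_i(r) := (1/f_i(r_i)) · exp[Σ_{m=1}^N ∫_{r*_m}^{r_m} ψ'_m(s)/f_m(s) ds]. Then: (a) W_i(r) ∂_i c_k(r) = e^{c₀(r)} ∂_i c_{k−1}(r) for every i, every k ∈ ℤ, and every r ∈ ℝ^N; consequently (b) if r : ℝ² → ℝ^N is smooth and solves ∂_s r_i = W_i(r) ∂_x r_i for every i, then C_k(x,s) := c_k(r(x,s)) satisfies ∂_s C_k = e^{C₀} ∂_x C_{k−1} for every k ∈ ℤ. -/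

import Mathlib

open Real Set

/-- Partial derivative of `f : (Fin N → ℝ) → ℝ` in the `i`-th coordinate at `r`. -/
noncomputable def pd {N : ℕ} (i : Fin N) (f : (Fin N → ℝ) → ℝ) (r : Fin N → ℝ) : ℝ :=
  deriv (fun s => f (Function.update r i s)) (r i)

/-- Partial derivative in the first variable. -/
noncomputable def pdx (f : ℝ → ℝ → ℝ) (x t : ℝ) : ℝ := deriv (fun x' => f x' t) x

/-- Partial derivative in the second variable. -/
noncomputable def pdt (f : ℝ → ℝ → ℝ) (x t : ℝ) : ℝ := deriv (fun t' => f x t') t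

/-- FTC: derivative of the primitive of a continuous function. -/
lemma hasDerivAt_primitive {g : ℝ → ℝ} (hg : Continuous g) (a b : ℝ) :
    HasDerivAt (fun u => ∫ x in a..u, g x) (g b) b :=
  intervalIntegral.integral_hasDerivAt_right (hg.intervalIntegrable a b)
    (hg.stronglyMeasurableAtFilter _ _) hg.continuousAt

/-- The coordinate update map has derivative `Pi.single i 1`. -/
lemma hasDerivAt_update' {N : ℕ} (rr : Fin N → ℝ) (i : Fin N) (s : ℝ) :
    HasDerivAt (fun u => Function.update rr i u) ((Pi.single i (1 : ℝ) : Fin N → ℝ)) s := by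
  have h : (fun u : ℝ => Function.update rr i u)
      = fun u : ℝ => rr + (u - rr i) • (Pi.single i (1 : ℝ) : Fin N → ℝ) := by
    funext u
    funext j
    by_cases hj : j = i
    · subst hj; simp
    · simp [Function.update_apply, hj, Pi.single_apply]
  rw [h]
  have h1 : HasDerivAt (fun u : ℝ => (u - rr i) • (Pi.single i (1 : ℝ) : Fin N → ℝ))
      ((1 : ℝ) • (Pi.single i (1 : ℝ) : Fin N → ℝ)) s :=
    ((hasDerivAt_id s).sub_const (rr i)).smul_const _
  exact ((hasDerivAt_const s rr).add h1).congr_deriv (by simp)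

/-- (a) The velocities `Wᵢ = (1/fᵢ(rᵢ)) exp[Σ ∫ ψ'_m/f_m]` satisfy the
reduction identity `Wᵢ ∂ᵢ c_k = e^{c₀} ∂ᵢ c_{k−1}` for the moments
`c_k(r) = Σ_m ∫ f_m^{k−1} ψ'_m`, and consequently (b) every solution of the
diagonal system `∂ₛ rᵢ = Wᵢ(r) ∂ₓ rᵢ` yields moments satisfying the first
negative flow `∂ₛ C_k = e^{C₀} ∂ₓ C_{k−1}` of the hydrodynamic chain. -/
theorem negative_flow_reduction
    (N : ℕ) (hN : 1 ≤ N) (f ψ : Fin N → ℝ → ℝ)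
    (hf : ∀ m, ContDiff ℝ (⊤ : ℕ∞) (f m)) (hψ : ∀ m, ContDiff ℝ (⊤ : ℕ∞) (ψ m))
    (hf0 : ∀ m s, f m s ≠ 0) (r₀ : Fin N → ℝ)
    (c : ℤ → (Fin N → ℝ) → ℝ)
    (hc : ∀ (k : ℤ) (rr : Fin N → ℝ),
      c k rr = ∑ m, ∫ s in (r₀ m)..(rr m), (f m s) ^ (k - 1) * deriv (ψ m) s)
    (W : Fin N → (Fin N → ℝ) → ℝ)
    (hW : ∀ (i : Fin N) (rr : Fin N → ℝ),
      W i rr = (1 / f i (rr i))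
        * Real.exp (∑ m, ∫ s in (r₀ m)..(rr m), deriv (ψ m) s / f m s)) :
    (∀ (i : Fin N) (k : ℤ) (rr : Fin N → ℝ),
      W i rr * pd i (c k) rr = Real.exp (c 0 rr) * pd i (c (k - 1)) rr) ∧
    (∀ r : ℝ → ℝ → Fin N → ℝ,
      ContDiff ℝ (⊤ : ℕ∞) (fun p : ℝ × ℝ => r p.1 p.2) →
      (∀ (x s : ℝ) (i : Fin N),
        pdt (fun x' s' => r x' s' i) x s
          = W i (r x s) * pdx (fun x' s' => r x' s' i) x s) →
      ∀ (k : ℤ) (x s : ℝ),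
        pdt (fun x' s' => c k (r x' s')) x s
          = Real.exp (c 0 (r x s)) * pdx (fun x' s' => c (k - 1) (r x' s')) x s) := by
  -- the integrands
  set g : ℤ → Fin N → ℝ → ℝ := fun k m s => (f m s) ^ (k - 1) * deriv (ψ m) s with hg
  have hgcont : ∀ (k : ℤ) (m : Fin N), Continuous (g k m) := by
    intro k m
    exact ((hf m).continuous.zpow₀ _ (fun s => Or.inl (hf0 m s))).mul
      ((hψ m).continuous_deriv (by exact_mod_cast le_top))
  -- total derivative of c k
  have hcf : ∀ (k : ℤ) (rr : Fin N → ℝ),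
      HasFDerivAt (c k)
        (∑ m, (g k m (rr m)) • (ContinuousLinearMap.proj m : (Fin N → ℝ) →L[ℝ] ℝ)) rr := by
    intro k rr
    have hck : c k = fun rr => ∑ m, ∫ s in (r₀ m)..(rr m), g k m s := funext (hc k)
    rw [hck]
    apply HasFDerivAt.fun_sum
    intro m _
    have hproj : HasFDerivAt (fun y : Fin N → ℝ => y m)
        (ContinuousLinearMap.proj m : (Fin N → ℝ) →L[ℝ] ℝ) rr :=
      (ContinuousLinearMap.proj m : (Fin N → ℝ) →L[ℝ] ℝ).hasFDerivAt
    exact (hasDerivAt_primitive (hgcont k m) (r₀ m) (rr m)).comp_hasFDerivAt rr hproj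
  -- evaluation of that derivative on a vector
  have heval : ∀ (k : ℤ) (rr : Fin N → ℝ) (v : Fin N → ℝ),
      (∑ m, (g k m (rr m)) • (ContinuousLinearMap.proj m : (Fin N → ℝ) →L[ℝ] ℝ)) v
        = ∑ m, g k m (rr m) * v m := by
    intro k rr v
    simp [ContinuousLinearMap.sum_apply]
  -- partial derivative formula
  have hpd : ∀ (k : ℤ) (i : Fin N) (rr : Fin N → ℝ),
      pd i (c k) rr = g k i (rr i) := by
    intro k i rr
    have h1 : HasDerivAt (fun s => c k (Function.update rr i s))
        ((∑ m, (g k m (rr m)) • (ContinuousLinearMap.proj m : (Fin N → ℝ) →L[ℝ] ℝ))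
          ((Pi.single i (1 : ℝ) : Fin N → ℝ))) (rr i) := by
      have hfd : HasFDerivAt (c k)
          (∑ m, (g k m (rr m)) • (ContinuousLinearMap.proj m : (Fin N → ℝ) →L[ℝ] ℝ))
          (Function.update rr i (rr i)) := by
        rw [Function.update_eq_self]; exact hcf k rr
      have h2 := hfd.comp_hasDerivAt (rr i) (hasDerivAt_update' rr i (rr i))
      exact h2
    rw [pd, h1.deriv, heval]
    rw [Finset.sum_eq_single i]
    · simp
    · intro b _ hb
      simp [Pi.single_apply, hb]
    · simp
  -- c 0 and the exponent in W agree
  have hc0 : ∀ rr : Fin N → ℝ,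
      (∑ m, ∫ s in (r₀ m)..(rr m), deriv (ψ m) s / f m s) = c 0 rr := by
    intro rr
    rw [hc]
    refine Finset.sum_congr rfl fun m _ => ?_
    congr 1
    funext s
    rw [show ((0 : ℤ) - 1) = -1 by ring, zpow_neg_one]
    field_simp
  -- part (a)
  have parta : ∀ (i : Fin N) (k : ℤ) (rr : Fin N → ℝ),
      W i rr * pd i (c k) rr = Real.exp (c 0 rr) * pd i (c (k - 1)) rr := by
    intro i k rr
    rw [hpd, hpd, hW, hc0]
    have hfi := hf0 i (rr i)
    have hz : f i (rr i) ^ (k - 1) = f i (rr i) ^ (k - 1 - 1) * f i (rr i) := by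
      rw [← zpow_add_one₀ hfi]
      ring_nf
    rw [hg]
    simp only []
    rw [hz]
    field_simp
  refine ⟨parta, ?_⟩
  -- part (b)
  intro r hr hsol k x s
  -- the slices of r
  have hu : ContDiff ℝ (⊤ : ℕ∞) (fun t' => r x t') :=
    hr.comp ((contDiff_const (c := x)).prodMk contDiff_id)
  have hw : ContDiff ℝ (⊤ : ℕ∞) (fun x' => r x' s) :=
    hr.comp (contDiff_id.prodMk (contDiff_const (c := s)))
  have hud : HasDerivAt (fun t' => r x t') (deriv (fun t' => r x t') s) s :=
    ((hu.differentiable (by simp)) s).hasDerivAt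
  have hwd : HasDerivAt (fun x' => r x' s) (deriv (fun x' => r x' s) x) x :=
    ((hw.differentiable (by simp)) x).hasDerivAt
  set v : Fin N → ℝ := deriv (fun t' => r x t') s with hv
  set w : Fin N → ℝ := deriv (fun x' => r x' s) x with hwdef
  -- component derivatives
  have hvc : ∀ i, pdt (fun x' s' => r x' s' i) x s = v i := by
    intro i
    have := (ContinuousLinearMap.proj (R := ℝ) (φ := fun _ : Fin N => ℝ) i).hasFDerivAt.comp_hasDerivAt s hud
    exact (this : HasDerivAt (fun t' => r x t' i) (v i) s).deriv
  have hwc : ∀ i, pdx (fun x' s' => r x' s' i) x s = w i := by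
    intro i
    have := (ContinuousLinearMap.proj (R := ℝ) (φ := fun _ : Fin N => ℝ) i).hasFDerivAt.comp_hasDerivAt x hwd
    exact (this : HasDerivAt (fun x' => r x' s i) (w i) x).deriv
  -- chain rule for the composites
  have hCt : pdt (fun x' s' => c k (r x' s')) x s = ∑ m, g k m (r x s m) * v m := by
    have h1 := (hcf k (r x s)).comp_hasDerivAt s hud
    have h2 : HasDerivAt (fun t' => c k (r x t'))
        ((∑ m, (g k m (r x s m)) • (ContinuousLinearMap.proj m : (Fin N → ℝ) →L[ℝ] ℝ)) v) s := by
      exact h1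
    rw [pdt, h2.deriv, heval]
  have hCx : pdx (fun x' s' => c (k - 1) (r x' s')) x s
      = ∑ m, g (k - 1) m (r x s m) * w m := by
    have h1 := (hcf (k - 1) (r x s)).comp_hasDerivAt x hwd
    have h2 : HasDerivAt (fun x' => c (k - 1) (r x' s))
        ((∑ m, (g (k - 1) m (r x s m)) • (ContinuousLinearMap.proj m : (Fin N → ℝ) →L[ℝ] ℝ)) w) x := by
      exact h1
    rw [pdx, h2.deriv, heval]
  rw [hCt, hCx, Finset.mul_sum]
  refine Finset.sum_congr rfl fun m _ => ?_
  have hvm : v m = W m (r x s) * w m := by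
    rw [← hvc m, ← hwc m]; exact hsol x s m
  have ha := parta m k (r x s)
  rw [hpd, hpd] at ha
  rw [hvm]
  linear_combination w m * ha
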